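/- For every L(1,2)-edge labeling f of the 86-edge graph G and every fork edge e of H (there are 12 such edges), at most three edges of G not belonging to H have label f(e). -/

import Mathlib

/-- The infinite octagonal grid `T8` (the king graph on `ℤ × ℤ`). -/
def T8 : SimpleGraph (ℤ × ℤ) where
  Adj u v := u ≠ v ∧ |u.1 - v.1| ≤ 1 ∧ |u.2 - v.2| ≤ 1
  symm := ⟨by
    intro u v h
    refine ⟨h.1.symm, ?_, ?_⟩
    · rw [abs_sub_comm]; exact h.2.1
    · rw [abs_sub_comm]; exact h.2.2⟩
  loopless := ⟨fun u h => h.1 rfl⟩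

/-- `f` is an L(1,2)-edge labeling of `G`. -/
def IsL12 {V : Type*} (G : SimpleGraph V) (f : Sym2 V → ℕ) : Prop :=
  (∀ e1 ∈ G.edgeSet, ∀ e2 ∈ G.edgeSet, e1 ≠ e2 → (∃ v, v ∈ e1 ∧ v ∈ e2) →
    f e1 ≠ f e2) ∧
  (∀ e1 ∈ G.edgeSet, ∀ e2 ∈ G.edgeSet, e1 ≠ e2 → ¬ (∃ v, v ∈ e1 ∧ v ∈ e2) →
    (∃ e3 ∈ G.edgeSet, (∃ v, v ∈ e1 ∧ v ∈ e3) ∧ (∃ v, v ∈ e2 ∧ v ∈ e3)) →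
    2 ≤ |(f e1 : ℤ) - (f e2 : ℤ)|)

/-- The 2×2 block `B` of vertices of `T8`. -/
def BVerts : Set (ℤ × ℤ) := {(0,0), (1,0), (0,1), (1,1)}

/-- The 4×4 block `{-1,0,1,2} × {-1,0,1,2}` of vertices of `T8`. -/
def Blk4 : Set (ℤ × ℤ) := {p | p.1 ∈ Set.Icc (-1 : ℤ) 2 ∧ p.2 ∈ Set.Icc (-1 : ℤ) 2}

/-- The 86-edge subgraph `G` of `T8`: all edges of `T8` incident to a vertex of the
4×4 block. -/
def G8 : SimpleGraph (ℤ × ℤ) where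
  Adj u w := T8.Adj u w ∧ (u ∈ Blk4 ∨ w ∈ Blk4)
  symm := ⟨fun u w h => ⟨T8.symm.symm u w h.1, h.2.symm⟩⟩
  loopless := ⟨fun u h => T8.loopless.irrefl u h.1⟩

/-- The 26 edges of the subgraph `H` of `T8`: all edges of `T8` incident to a vertex
of the 2×2 block `B`. -/
def HEdges : Set (Sym2 (ℤ × ℤ)) := {e | e ∈ G8.edgeSet ∧ ∃ u ∈ e, u ∈ BVerts}

/-- The fork `F_u` at a vertex `u` of `B`: the 3 edges joining `u` to its three
neighbours in the outward corner direction. -/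
def Fork (u : ℤ × ℤ) : Set (Sym2 (ℤ × ℤ)) :=
  {s(u, (3 * u.1 - 1, u.2)), s(u, (3 * u.1 - 1, 3 * u.2 - 1)), s(u, (u.1, 3 * u.2 - 1))}

/-- The 12 fork edges of `H`. -/
def ForkEdges : Set (Sym2 (ℤ × ℤ)) := ⋃ u ∈ BVerts, Fork u

section Aux

abbrev EP := (ℤ × ℤ) × (ℤ × ℤ)

/-- the Sym2 edge of a pair -/
def tou (p : EP) : Sym2 (ℤ × ℤ) := s(p.1, p.2)

def edges : List EP := [((-2,-2),(-1,-1)), ((-2,-1),(-1,-1)), ((-2,-1),(-1,0)), ((-2,0),(-1,-1)), ((-2,0),(-1,0)), ((-2,0),(-1,1)), ((-2,1),(-1,0)), ((-2,1),(-1,1)), ((-2,1),(-1,2)), ((-2,2),(-1,1)), ((-2,2),(-1,2)), ((-2,3),(-1,2)), ((-1,-2),(-1,-1)), ((-1,-2),(0,-1)), ((-1,-1),(-1,0)), ((-1,-1),(0,-2)), ((-1,-1),(0,-1)), ((-1,-1),(0,0)), ((-1,0),(-1,1)), ((-1,0),(0,-1)), ((-1,0),(0,0)), ((-1,0),(0,1)),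 ((-1,1),(-1,2)), ((-1,1),(0,0)), ((-1,1),(0,1)), ((-1,1),(0,2)), ((-1,2),(-1,3)), ((-1,2),(0,1)), ((-1,2),(0,2)), ((-1,2),(0,3)), ((-1,3),(0,2)), ((0,-2),(0,-1)), ((0,-2),(1,-1)), ((0,-1),(0,0)), ((0,-1),(1,-2)), ((0,-1),(1,-1)), ((0,-1),(1,0)), ((0,0),(0,1)), ((0,0),(1,-1)), ((0,0),(1,0)), ((0,0),(1,1)), ((0,1),(0,2)), ((0,1),(1,0)), ((0,1),(1,1)), ((0,1),(1,2)), ((0,2),(0,3)), ((0,2),(1,1)), ((0,2),(1,2)), ((0,2),(1,3)), ((0,3),(1,2)), ((1,-2),(1,-1)), ((1,-2),(2,-1)), ((1,-1),(1,0)), ((1,-1),(2,-2)), ((1,-1),(2,-1)), ((1,-1),(2,0)), ((1,0),(1,1)), ((1,0),(2,-1)), ((1,0),(2,0)), ((1,0),(2,1)), ((1,1),(1,2)), ((1,1),(2,0)), ((1,1),(2,1)), ((1,1),(2,2)), ((1,2),(1,3)), ((1,2),(2,1)), ((1,2),(2,2)), ((1,2),(2,3)), ((1,3),(2,2)), ((2,-2),(2,-1)),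 ((2,-1),(2,0)), ((2,-1),(3,-2)), ((2,-1),(3,-1)), ((2,-1),(3,0)), ((2,0),(2,1)), ((2,0),(3,-1)), ((2,0),(3,0)), ((2,0),(3,1)), ((2,1),(2,2)), ((2,1),(3,0)), ((2,1),(3,1)), ((2,1),(3,2)), ((2,2),(2,3)), ((2,2),(3,1)), ((2,2),(3,2)), ((2,2),(3,3))]

def forkData : List (EP × List EP × List EP × List EP) := [
  (((-1,0),(0,0)), [((-2,2),(-1,2)), ((-2,3),(-1,2)), ((-1,2),(-1,3)), ((-1,2),(0,2)), ((-1,2),(0,3)), ((-1,3),(0,2)), ((0,2),(0,3)), ((0,2),(1,2)), ((0,2),(1,3)), ((0,3),(1,2))], [((1,-2),(2,-1)), ((2,-2),(2,-1)), ((2,-1),(2,0)), ((2,-1),(3,-2)), ((2,-1),(3,-1)), ((2,-1),(3,0)), ((2,0),(2,1)), ((2,0),(3,-1)), ((2,0),(3,0)), ((2,0),(3,1)), ((2,1),(3,0))], [((1,2),(1,3)), ((1,2),(2,1)), ((1,2),(2,2)), ((1,2),(2,3)), ((1,3),(2,2)), ((2,1),(2,2)), ((2,1),(3,1)), ((2,1),(3,2)),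 ((2,2),(2,3)), ((2,2),(3,1)), ((2,2),(3,2)), ((2,2),(3,3))]),
  (((-1,-1),(0,0)), [((-2,1),(-1,2)), ((-2,2),(-1,2)), ((-2,3),(-1,2)), ((-1,2),(-1,3)), ((-1,2),(0,2)), ((-1,2),(0,3)), ((-1,3),(0,2)), ((0,2),(0,3)), ((0,2),(1,2)), ((0,2),(1,3)), ((0,3),(1,2))], [((1,-2),(2,-1)), ((2,-2),(2,-1)), ((2,-1),(2,0)), ((2,-1),(3,-2)), ((2,-1),(3,-1)), ((2,-1),(3,0)), ((2,0),(2,1)), ((2,0),(3,-1)), ((2,0),(3,0)), ((2,0),(3,1)), ((2,1),(3,0))], [((1,2),(1,3)), ((1,2),(2,1)), ((1,2),(2,2)), ((1,2),(2,3)), ((1,3),(2,2)), ((2,1),(2,2)), ((2,1),(3,1)), ((2,1),(3,2)), ((2,2),(2,3)), ((2,2),(3,1)), ((2,2),(3,2)), ((2,2),(3,3))]),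
  (((0,-1),(0,0)), [((2,-2),(2,-1)), ((2,-1),(2,0)), ((2,-1),(3,-2)), ((2,-1),(3,-1)), ((2,-1),(3,0)), ((2,0),(2,1)), ((2,0),(3,-1)), ((2,0),(3,0)), ((2,0),(3,1)), ((2,1),(3,0))], [((-2,1),(-1,2)), ((-2,2),(-1,2)), ((-2,3),(-1,2)), ((-1,2),(-1,3)), ((-1,2),(0,2)), ((-1,2),(0,3)), ((-1,3),(0,2)), ((0,2),(0,3)), ((0,2),(1,2)), ((0,2),(1,3)), ((0,3),(1,2))], [((1,2),(1,3)), ((1,2),(2,1)), ((1,2),(2,2)), ((1,2),(2,3)), ((1,3),(2,2)), ((2,1),(2,2)), ((2,1),(3,1)), ((2,1),(3,2)), ((2,2),(2,3)), ((2,2),(3,1)), ((2,2),(3,2)), ((2,2),(3,3))]),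
  (((1,0),(2,0)), [((0,2),(1,2)), ((0,2),(1,3)), ((0,3),(1,2)), ((1,2),(1,3)), ((1,2),(2,2)), ((1,2),(2,3)), ((1,3),(2,2)), ((2,2),(2,3)), ((2,2),(3,2)), ((2,2),(3,3))], [((-2,-2),(-1,-1)), ((-2,-1),(-1,-1)), ((-2,-1),(-1,0)), ((-2,0),(-1,-1)), ((-2,0),(-1,0)), ((-2,0),(-1,1)), ((-2,1),(-1,0)), ((-1,-2),(-1,-1)), ((-1,-1),(-1,0)), ((-1,-1),(0,-2)), ((-1,0),(-1,1))], [((-2,1),(-1,1)), ((-2,1),(-1,2)), ((-2,2),(-1,1)), ((-2,2),(-1,2)), ((-2,3),(-1,2)), ((-1,1),(-1,2)), ((-1,1),(0,2)), ((-1,2),(-1,3)), ((-1,2),(0,2)), ((-1,2),(0,3)), ((-1,3),(0,2)), ((0,2),(0,3))]),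
  (((1,0),(2,-1)), [((-2,-2),(-1,-1)), ((-2,-1),(-1,-1)), ((-2,-1),(-1,0)), ((-2,0),(-1,-1)), ((-2,0),(-1,0)), ((-2,0),(-1,1)), ((-2,1),(-1,0)), ((-1,-2),(-1,-1)), ((-1,-1),(-1,0)), ((-1,-1),(0,-2)), ((-1,0),(-1,1))], [((0,2),(1,2)), ((0,2),(1,3)), ((0,3),(1,2)), ((1,2),(1,3)), ((1,2),(2,2)), ((1,2),(2,3)), ((1,3),(2,2)), ((2,2),(2,3)), ((2,2),(3,1)), ((2,2),(3,2)), ((2,2),(3,3))], [((-2,1),(-1,1)), ((-2,1),(-1,2)), ((-2,2),(-1,1)), ((-2,2),(-1,2)), ((-2,3),(-1,2)), ((-1,1),(-1,2)), ((-1,1),(0,2)), ((-1,2),(-1,3)), ((-1,2),(0,2)), ((-1,2),(0,3)), ((-1,3),(0,2)), ((0,2),(0,3))]),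
  (((1,-1),(1,0)), [((-2,-2),(-1,-1)), ((-2,-1),(-1,-1)), ((-2,-1),(-1,0)), ((-2,0),(-1,-1)), ((-2,0),(-1,0)), ((-2,0),(-1,1)), ((-2,1),(-1,0)), ((-1,-2),(-1,-1)), ((-1,-1),(-1,0)), ((-1,0),(-1,1))], [((0,2),(1,2)), ((0,2),(1,3)), ((0,3),(1,2)), ((1,2),(1,3)), ((1,2),(2,2)), ((1,2),(2,3)), ((1,3),(2,2)), ((2,2),(2,3)), ((2,2),(3,1)), ((2,2),(3,2)), ((2,2),(3,3))], [((-2,1),(-1,1)), ((-2,1),(-1,2)), ((-2,2),(-1,1)), ((-2,2),(-1,2)), ((-2,3),(-1,2)), ((-1,1),(-1,2)), ((-1,1),(0,2)), ((-1,2),(-1,3)), ((-1,2),(0,2)), ((-1,2),(0,3)), ((-1,3),(0,2)), ((0,2),(0,3))]),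
  (((-1,1),(0,1)), [((-2,-2),(-1,-1)), ((-2,-1),(-1,-1)), ((-1,-2),(-1,-1)), ((-1,-2),(0,-1)), ((-1,-1),(0,-2)), ((-1,-1),(0,-1)), ((0,-2),(0,-1)), ((0,-2),(1,-1)), ((0,-1),(1,-2)), ((0,-1),(1,-1))], [((1,3),(2,2)), ((2,0),(2,1)), ((2,0),(3,1)), ((2,1),(2,2)), ((2,1),(3,0)), ((2,1),(3,1)), ((2,1),(3,2)), ((2,2),(2,3)), ((2,2),(3,1)), ((2,2),(3,2)), ((2,2),(3,3))], [((1,-2),(1,-1)), ((1,-2),(2,-1)), ((1,-1),(2,-2)), ((1,-1),(2,-1)), ((1,-1),(2,0)), ((2,-2),(2,-1)), ((2,-1),(2,0)), ((2,-1),(3,-2)), ((2,-1),(3,-1)), ((2,-1),(3,0)), ((2,0),(3,-1)), ((2,0),(3,0))]),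
  (((-1,2),(0,1)), [((-2,-2),(-1,-1)), ((-2,-1),(-1,-1)), ((-2,0),(-1,-1)), ((-1,-2),(-1,-1)), ((-1,-2),(0,-1)), ((-1,-1),(0,-2)), ((-1,-1),(0,-1)), ((0,-2),(0,-1)), ((0,-2),(1,-1)), ((0,-1),(1,-2)), ((0,-1),(1,-1))], [((1,3),(2,2)), ((2,0),(2,1)), ((2,0),(3,1)), ((2,1),(2,2)), ((2,1),(3,0)), ((2,1),(3,1)), ((2,1),(3,2)), ((2,2),(2,3)), ((2,2),(3,1)), ((2,2),(3,2)), ((2,2),(3,3))], [((1,-2),(1,-1)), ((1,-2),(2,-1)), ((1,-1),(2,-2)), ((1,-1),(2,-1)), ((1,-1),(2,0)), ((2,-2),(2,-1)), ((2,-1),(2,0)), ((2,-1),(3,-2)), ((2,-1),(3,-1)), ((2,-1),(3,0)), ((2,0),(3,-1)), ((2,0),(3,0))]),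
  (((0,1),(0,2)), [((2,0),(2,1)), ((2,0),(3,1)), ((2,1),(2,2)), ((2,1),(3,0)), ((2,1),(3,1)), ((2,1),(3,2)), ((2,2),(2,3)), ((2,2),(3,1)), ((2,2),(3,2)), ((2,2),(3,3))], [((-2,-2),(-1,-1)), ((-2,-1),(-1,-1)), ((-2,0),(-1,-1)), ((-1,-2),(-1,-1)), ((-1,-2),(0,-1)), ((-1,-1),(0,-2)), ((-1,-1),(0,-1)), ((0,-2),(0,-1)), ((0,-2),(1,-1)), ((0,-1),(1,-2)), ((0,-1),(1,-1))], [((1,-2),(1,-1)), ((1,-2),(2,-1)), ((1,-1),(2,-2)), ((1,-1),(2,-1)), ((1,-1),(2,0)), ((2,-2),(2,-1)), ((2,-1),(2,0)), ((2,-1),(3,-2)), ((2,-1),(3,-1)), ((2,-1),(3,0)), ((2,0),(3,-1)), ((2,0),(3,0))]),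
  (((1,1),(2,1)), [((0,-2),(1,-1)), ((0,-1),(1,-2)), ((0,-1),(1,-1)), ((1,-2),(1,-1)), ((1,-2),(2,-1)), ((1,-1),(2,-2)), ((1,-1),(2,-1)), ((2,-2),(2,-1)), ((2,-1),(3,-2)), ((2,-1),(3,-1))], [((-2,0),(-1,1)), ((-2,1),(-1,0)), ((-2,1),(-1,1)), ((-2,1),(-1,2)), ((-2,2),(-1,1)), ((-2,2),(-1,2)), ((-2,3),(-1,2)), ((-1,0),(-1,1)), ((-1,1),(-1,2)), ((-1,2),(-1,3)), ((-1,2),(0,3))], [((-2,-2),(-1,-1)), ((-2,-1),(-1,-1)), ((-2,-1),(-1,0)), ((-2,0),(-1,-1)), ((-2,0),(-1,0)), ((-1,-2),(-1,-1)), ((-1,-2),(0,-1)), ((-1,-1),(-1,0)), ((-1,-1),(0,-2)), ((-1,-1),(0,-1)), ((-1,0),(0,-1)), ((0,-2),(0,-1))]),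
  (((1,1),(2,2)), [((-2,0),(-1,1)), ((-2,1),(-1,0)), ((-2,1),(-1,1)), ((-2,1),(-1,2)), ((-2,2),(-1,1)), ((-2,2),(-1,2)), ((-2,3),(-1,2)), ((-1,0),(-1,1)), ((-1,1),(-1,2)), ((-1,2),(-1,3)), ((-1,2),(0,3))], [((0,-2),(1,-1)), ((0,-1),(1,-2)), ((0,-1),(1,-1)), ((1,-2),(1,-1)), ((1,-2),(2,-1)), ((1,-1),(2,-2)), ((1,-1),(2,-1)), ((2,-2),(2,-1)), ((2,-1),(3,-2)), ((2,-1),(3,-1)), ((2,-1),(3,0))], [((-2,-2),(-1,-1)), ((-2,-1),(-1,-1)), ((-2,-1),(-1,0)), ((-2,0),(-1,-1)), ((-2,0),(-1,0)), ((-1,-2),(-1,-1)), ((-1,-2),(0,-1)), ((-1,-1),(-1,0)), ((-1,-1),(0,-2)), ((-1,-1),(0,-1)), ((-1,0),(0,-1)), ((0,-2),(0,-1))]),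
  (((1,1),(1,2)), [((-2,0),(-1,1)), ((-2,1),(-1,0)), ((-2,1),(-1,1)), ((-2,1),(-1,2)), ((-2,2),(-1,1)), ((-2,2),(-1,2)), ((-2,3),(-1,2)), ((-1,0),(-1,1)), ((-1,1),(-1,2)), ((-1,2),(-1,3))], [((0,-2),(1,-1)), ((0,-1),(1,-2)), ((0,-1),(1,-1)), ((1,-2),(1,-1)), ((1,-2),(2,-1)), ((1,-1),(2,-2)), ((1,-1),(2,-1)), ((2,-2),(2,-1)), ((2,-1),(3,-2)), ((2,-1),(3,-1)), ((2,-1),(3,0))], [((-2,-2),(-1,-1)), ((-2,-1),(-1,-1)), ((-2,-1),(-1,0)), ((-2,0),(-1,-1)), ((-2,0),(-1,0)), ((-1,-2),(-1,-1)), ((-1,-2),(0,-1)), ((-1,-1),(-1,0)), ((-1,-1),(0,-2)), ((-1,-1),(0,-1)), ((-1,0),(0,-1)), ((0,-2),(0,-1))])]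

def inB (v : ℤ × ℤ) : Bool := v = (0,0) ∨ v = (1,0) ∨ v = (0,1) ∨ v = (1,1)
def touches (p : EP) : Bool := inB p.1 || inB p.2
def share (p q : EP) : Bool := p.1 = q.1 ∨ p.1 = q.2 ∨ p.2 = q.1 ∨ p.2 = q.2
def near (p q : EP) : Bool := share p q || edges.any (fun r => share p r && share q r)

instance : DecidablePred (· ∈ Blk4) := fun v =>
  decidable_of_iff (-1 ≤ v.1 ∧ v.1 ≤ 2 ∧ -1 ≤ v.2 ∧ v.2 ≤ 2) (by
    simp [Blk4, Set.mem_Icc]; tauto)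
instance : DecidableRel T8.Adj := fun u v =>
  inferInstanceAs (Decidable (u ≠ v ∧ |u.1 - v.1| ≤ 1 ∧ |u.2 - v.2| ≤ 1))
instance : DecidableRel G8.Adj := fun u v =>
  inferInstanceAs (Decidable (T8.Adj u v ∧ (u ∈ Blk4 ∨ v ∈ Blk4)))

theorem edges_adj : ∀ p ∈ edges, G8.Adj p.1 p.2 := by decide

theorem edges_sub : ∀ p ∈ edges, tou p ∈ G8.edgeSet := fun p hp =>
  (G8.mem_edgeSet).2 (edges_adj p hp)

def chkA : Bool := forkData.all fun x => edges.all fun p =>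
  touches p || decide (p ∈ x.2.1) || decide (p ∈ x.2.2.1) || decide (p ∈ x.2.2.2)
    || near p x.1

def chkB : Bool := forkData.all fun x =>
  [x.2.1, x.2.2.1, x.2.2.2].all fun c => c.all fun p => c.all fun p' => near p p'

theorem chkA_true : chkA = true := by decide
theorem chkB_true : chkB = true := by decide
theorem forks_sub : ∀ x ∈ forkData, x.1 ∈ edges := by decide

theorem share_spec {p q : EP} (h : share p q = true) :
    ∃ v, v ∈ tou p ∧ v ∈ tou q := by
  simp only [share, decide_eq_true_eq] at h
  simp only [tou, Sym2.mem_iff]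
  rcases h with h|h|h|h
  exacts [⟨p.1, Or.inl rfl, Or.inl h⟩, ⟨p.1, Or.inl rfl, Or.inr h⟩,
    ⟨p.2, Or.inr rfl, Or.inl h⟩, ⟨p.2, Or.inr rfl, Or.inr h⟩]

theorem not_share_spec {p q : EP} (h : share p q = false) :
    ¬ ∃ v, v ∈ tou p ∧ v ∈ tou q := by
  rintro ⟨v, hv1, hv2⟩
  rw [tou, Sym2.mem_iff] at hv1 hv2
  have ht : share p q = true := by
    simp only [share, Bool.or_eq_true, decide_eq_true_eq]
    rcases hv1 with rfl | rfl <;> tauto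
  rw [h] at ht
  exact Bool.false_ne_true ht

theorem touches_spec {p : EP} (h : touches p = true) : ∃ u ∈ tou p, u ∈ BVerts := by
  simp only [touches, inB, Bool.or_eq_true, decide_eq_true_eq] at h
  have hb : ∀ v : ℤ × ℤ, (v = (0,0) ∨ v = (1,0) ∨ v = (0,1) ∨ v = (1,1)) → v ∈ BVerts := by
    intro v hv
    simp only [BVerts, Set.mem_insert_iff, Set.mem_singleton_iff]
    tauto
  rcases h with h | h
  · exact ⟨p.1, by rw [tou, Sym2.mem_iff]; exact Or.inl rfl, hb _ h⟩
  · exact ⟨p.2, by rw [tou, Sym2.mem_iff]; exact Or.inr rfl, hb _ h⟩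

/-- two edges at distance ≤ 2 with equal labels must be equal -/
theorem near_contra (f : Sym2 (ℤ × ℤ) → ℕ) (hf : IsL12 G8 f) {p q : EP}
    (hp : p ∈ edges) (hq : q ∈ edges) (hne : tou p ≠ tou q)
    (l : f (tou p) = f (tou q)) (h : near p q = true) : False := by
  have hpe := edges_sub p hp
  have hqe := edges_sub q hq
  simp only [near, Bool.or_eq_true, List.any_eq_true, Bool.and_eq_true] at h
  rcases h with h | ⟨r, hr, h1, h2⟩
  · exact hf.1 (tou p) hpe (tou q) hqe hne (share_spec h) l
  · rcases hs : share p q with _ | _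
    · have := hf.2 (tou p) hpe (tou q) hqe hne (not_share_spec hs)
        ⟨tou r, edges_sub r hr, share_spec h1, share_spec h2⟩
      rw [l] at this
      simp at this
    · exact hf.1 (tou p) hpe (tou q) hqe hne (share_spec hs) l

theorem sameClass (f : Sym2 (ℤ × ℤ) → ℕ) (hf : IsL12 G8 f)
    {x : EP × List EP × List EP × List EP} (hx : x ∈ forkData)
    {c : List EP} (hc : c ∈ [x.2.1, x.2.2.1, x.2.2.2])
    {p p' : EP} (hp : p ∈ c) (hp' : p' ∈ c)
    (hpe : p ∈ edges) (hpe' : p' ∈ edges)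
    (l : f (tou p) = f (tou p')) : tou p = tou p' := by
  by_cases heq : tou p = tou p'
  · exact heq
  · exfalso
    have hB := chkB_true
    rw [chkB, List.all_eq_true] at hB
    have h1 := hB x hx
    rw [List.all_eq_true] at h1
    have h2 := h1 c hc
    rw [List.all_eq_true] at h2
    have h3 := h2 p hp
    rw [List.all_eq_true] at h3
    exact near_contra f hf hpe hpe' heq l (h3 p' hp')

theorem classify (f : Sym2 (ℤ × ℤ) → ℕ) (hf : IsL12 G8 f)
    {x : EP × List EP × List EP × List EP} (hx : x ∈ forkData)
    {p : EP} (hp : p ∈ edges) (ht : touches p = false)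
    (hne : tou p ≠ tou x.1) (l : f (tou p) = f (tou x.1)) :
    ∃ i : Fin 3, p ∈ [x.2.1, x.2.2.1, x.2.2.2].get i := by
  have hA := chkA_true
  rw [chkA, List.all_eq_true] at hA
  have h1 := hA x hx
  rw [List.all_eq_true] at h1
  have h2 := h1 p hp
  rcases hn : near p x.1 with _ | _
  · rw [ht, hn] at h2
    simp only [Bool.or_false, Bool.false_or, Bool.or_eq_true, decide_eq_true_eq] at h2
    rcases h2 with (h|h)|h
    exacts [⟨0, h⟩, ⟨1, h⟩, ⟨2, h⟩]
  · exact absurd (near_contra f hf hp (forks_sub x hx) hne l hn) not_false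

theorem engine (f : Sym2 (ℤ × ℤ) → ℕ) (hf : IsL12 G8 f)
    {x : EP × List EP × List EP × List EP} (hx : x ∈ forkData)
    {p1 p2 p3 p4 : EP}
    (h1 : p1 ∈ edges) (h2 : p2 ∈ edges) (h3 : p3 ∈ edges) (h4 : p4 ∈ edges)
    (t1 : touches p1 = false) (t2 : touches p2 = false)
    (t3 : touches p3 = false) (t4 : touches p4 = false)
    (n1 : tou p1 ≠ tou x.1) (n2 : tou p2 ≠ tou x.1)
    (n3 : tou p3 ≠ tou x.1) (n4 : tou p4 ≠ tou x.1)
    (l1 : f (tou p1) = f (tou x.1)) (l2 : f (tou p2) = f (tou x.1))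
    (l3 : f (tou p3) = f (tou x.1)) (l4 : f (tou p4) = f (tou x.1)) :
    tou p1 = tou p2 ∨ tou p1 = tou p3 ∨ tou p1 = tou p4 ∨
      tou p2 = tou p3 ∨ tou p2 = tou p4 ∨ tou p3 = tou p4 := by
  obtain ⟨i1, m1⟩ := classify f hf hx h1 t1 n1 l1
  obtain ⟨i2, m2⟩ := classify f hf hx h2 t2 n2 l2
  obtain ⟨i3, m3⟩ := classify f hf hx h3 t3 n3 l3
  obtain ⟨i4, m4⟩ := classify f hf hx h4 t4 n4 l4
  have hcm : ∀ i : Fin 3, [x.2.1, x.2.2.1, x.2.2.2].get i ∈ [x.2.1, x.2.2.1, x.2.2.2] :=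
    fun i => List.get_mem [x.2.1, x.2.2.1, x.2.2.2] i
  have pig : i1 = i2 ∨ i1 = i3 ∨ i1 = i4 ∨ i2 = i3 ∨ i2 = i4 ∨ i3 = i4 := by omega
  rcases pig with h|h|h|h|h|h
  · exact Or.inl (sameClass f hf hx (hcm i1) m1 (h ▸ m2) h1 h2 (by rw [l1, l2]))
  · exact Or.inr (Or.inl (sameClass f hf hx (hcm i1) m1 (h ▸ m3) h1 h3 (by rw [l1, l3])))
  · exact Or.inr (Or.inr (Or.inl (sameClass f hf hx (hcm i1) m1 (h ▸ m4) h1 h4 (by rw [l1, l4]))))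
  · exact Or.inr (Or.inr (Or.inr (Or.inl (sameClass f hf hx (hcm i2) m2 (h ▸ m3) h2 h3 (by rw [l2, l3])))))
  · exact Or.inr (Or.inr (Or.inr (Or.inr (Or.inl (sameClass f hf hx (hcm i2) m2 (h ▸ m4) h2 h4 (by rw [l2, l4]))))))
  · exact Or.inr (Or.inr (Or.inr (Or.inr (Or.inr (sameClass f hf hx (hcm i3) m3 (h ▸ m4) h3 h4 (by rw [l3, l4]))))))

theorem enum_half {u v : ℤ × ℤ} (hne : u ≠ v) (hx : |u.1 - v.1| ≤ 1)
    (hy : |u.2 - v.2| ≤ 1) (hu : u ∈ Blk4) :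
    ((u, v) ∈ edges ∨ (v, u) ∈ edges) := by
  obtain ⟨a, b⟩ := u
  obtain ⟨c, d⟩ := v
  simp only [Blk4, Set.mem_setOf_eq, Set.mem_Icc] at hu
  obtain ⟨⟨ha1, ha2⟩, hb1, hb2⟩ := hu
  rw [abs_le] at hx hy
  simp only at hx hy
  have hc1 : a - 1 ≤ c := by omega
  have hc2 : c ≤ a + 1 := by omega
  have hd1 : b - 1 ≤ d := by omega
  have hd2 : d ≤ b + 1 := by omega
  interval_cases a <;> interval_cases b <;> interval_cases c <;> interval_cases d <;>
    first
      | (exact absurd rfl hne)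
      | (left; decide)
      | (right; decide)

theorem mem_edges_of_edgeSet {e : Sym2 (ℤ × ℤ)} (h : e ∈ G8.edgeSet) :
    ∃ p ∈ edges, e = tou p := by
  induction e using Sym2.ind with
  | _ u v =>
    rw [SimpleGraph.mem_edgeSet] at h
    obtain ⟨⟨hne, hx, hy⟩, hb⟩ := h
    rcases hb with hu | hv
    · rcases enum_half hne hx hy hu with h | h
      · exact ⟨(u, v), h, rfl⟩
      · exact ⟨(v, u), h, Sym2.eq_swap⟩
    · have hx' : |v.1 - u.1| ≤ 1 := by rw [abs_sub_comm]; exact hx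
      have hy' : |v.2 - u.2| ≤ 1 := by rw [abs_sub_comm]; exact hy
      rcases enum_half (Ne.symm hne) hx' hy' hv with h | h
      · exact ⟨(v, u), h, Sym2.eq_swap⟩
      · exact ⟨(u, v), h, rfl⟩

theorem ei_data (f : Sym2 (ℤ × ℤ) → ℕ) {e1 : Sym2 (ℤ × ℤ)}
    (he1 : e1 ∈ G8.edgeSet \ HEdges) :
    ∃ p ∈ edges, e1 = tou p ∧ touches p = false := by
  obtain ⟨p, hp, rfl⟩ := mem_edges_of_edgeSet he1.1
  refine ⟨p, hp, rfl, ?_⟩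
  rcases ht : touches p with _ | _
  · rfl
  · exact absurd ⟨he1.1, touches_spec ht⟩ he1.2

theorem mainproof (f : Sym2 (ℤ × ℤ) → ℕ) (hf : IsL12 G8 f) :
    ∀ e ∈ HEdges, e ∈ ForkEdges →
      ∀ e1 ∈ G8.edgeSet \ HEdges, ∀ e2 ∈ G8.edgeSet \ HEdges,
        ∀ e3 ∈ G8.edgeSet \ HEdges, ∀ e4 ∈ G8.edgeSet \ HEdges,
        f e1 = f e → f e2 = f e → f e3 = f e → f e4 = f e →
        e1 = e2 ∨ e1 = e3 ∨ e1 = e4 ∨ e2 = e3 ∨ e2 = e4 ∨ e3 = e4 := by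
  intro e he hef e1 he1 e2 he2 e3 he3 e4 he4 l1 l2 l3 l4
  obtain ⟨p1, hp1, rfl, t1⟩ := ei_data f he1
  obtain ⟨p2, hp2, rfl, t2⟩ := ei_data f he2
  obtain ⟨p3, hp3, rfl, t3⟩ := ei_data f he3
  obtain ⟨p4, hp4, rfl, t4⟩ := ei_data f he4
  simp only [ForkEdges, BVerts, Fork, Set.mem_iUnion, Set.mem_insert_iff,
    Set.mem_singleton_iff] at hef
  norm_num at hef
  have main : ∀ x ∈ forkData, tou x.1 = e →
      s(p1.1, p1.2) = s(p2.1, p2.2) ∨ s(p1.1, p1.2) = s(p3.1, p3.2) ∨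
      s(p1.1, p1.2) = s(p4.1, p4.2) ∨ s(p2.1, p2.2) = s(p3.1, p3.2) ∨
      s(p2.1, p2.2) = s(p4.1, p4.2) ∨ s(p3.1, p3.2) = s(p4.1, p4.2) := by
    intro x hx hq
    have nn : ∀ p : EP, tou p ∈ G8.edgeSet \ HEdges → tou p ≠ tou x.1 := by
      intro p hp h
      exact hp.2 (by rw [h, hq]; exact he)
    exact engine f hf hx hp1 hp2 hp3 hp4 t1 t2 t3 t4
      (nn p1 he1) (nn p2 he2) (nn p3 he3) (nn p4 he4)
      (by rw [hq]; exact l1) (by rw [hq]; exact l2)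
      (by rw [hq]; exact l3) (by rw [hq]; exact l4)
  rcases hef with (h|h|h)|(h|h|h)|(h|h|h)|(h|h|h) <;> subst h <;>
    first
    | exact main (forkData.get ⟨0, by decide⟩) (List.get_mem _ _) (by decide)
    | exact main (forkData.get ⟨1, by decide⟩) (List.get_mem _ _) (by decide)
    | exact main (forkData.get ⟨2, by decide⟩) (List.get_mem _ _) (by decide)
    | exact main (forkData.get ⟨3, by decide⟩) (List.get_mem _ _) (by decide)
    | exact main (forkData.get ⟨4, by decide⟩) (List.get_mem _ _) (by decide)
    | exact main (forkData.get ⟨5, by decide⟩) (List.get_mem _ _) (by decide)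
    | exact main (forkData.get ⟨6, by decide⟩) (List.get_mem _ _) (by decide)
    | exact main (forkData.get ⟨7, by decide⟩) (List.get_mem _ _) (by decide)
    | exact main (forkData.get ⟨8, by decide⟩) (List.get_mem _ _) (by decide)
    | exact main (forkData.get ⟨9, by decide⟩) (List.get_mem _ _) (by decide)
    | exact main (forkData.get ⟨10, by decide⟩) (List.get_mem _ _) (by decide)
    | exact main (forkData.get ⟨11, by decide⟩) (List.get_mem _ _) (by decide)

end Aux

/-- For every L(1,2)-edge labeling of `G` and every fork edge `e` of `H`, at most
three edges of `G` outside `H` have label `f e`. -/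
theorem fork_reused_at_most_thrice (f : Sym2 (ℤ × ℤ) → ℕ) (hf : IsL12 G8 f) :
    ∀ e ∈ HEdges, e ∈ ForkEdges →
      ∀ e1 ∈ G8.edgeSet \ HEdges, ∀ e2 ∈ G8.edgeSet \ HEdges,
        ∀ e3 ∈ G8.edgeSet \ HEdges, ∀ e4 ∈ G8.edgeSet \ HEdges,
        f e1 = f e → f e2 = f e → f e3 = f e → f e4 = f e →
        e1 = e2 ∨ e1 = e3 ∨ e1 = e4 ∨ e2 = e3 ∨ e2 = e4 ∨ e3 = e4 := by
  exact mainproof f hf
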